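/- Let (p_i)_{i∈ℕ} be points of a bounded subset of ℝ², let x₀ ∈ ℝ², and let (Ω_i), (B^i_1), (B^i_2), (B^i_3) be real numbers with ∑_i (|Ω_i| + |B^i_1| + |B^i_2| + |B^i_3|) < ∞. Define the distributions on ℝ² (indices α, β, γ, κ range over {1,2}, k over {1,2,3}, with 3 written z, ε the 2D Levi-Civita symbol): Θ := ∑_i Ω_i δ_{p_i}; Λ_k := ∑_i B^i_k δ_{p_i}; α_β := ∑_i (B^i_β − ε_{βγ}(p^i_γ − x_{0γ}) Ω_i) δ_{p_i}; α_z := Λ_z; and the contortion κ_{kj} := δ_{kz} α_j − ½ α_z δ_{kj}. Then all these series converge in the sense of distributions, and for each k the distribution δ_{zk} Θ + ε_{αβ} ∂_α κ_{kβ} equals: for k = z, ∑_i ( Ω_i δ_{p_i} + ε_{αγ}( B^i_γ + ε_{βγ}(p^i_β − x_{0β}) Ω_i ) ∂_α δ_{p_i} ); and for k = κ ∈ {1,2}, ½ ε_{κα} ∑_i B^i_z ∂_α δ_{p_i}. -/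

import Mathlib

open MeasureTheory Real

/-- Partial derivative in the `α`-th coordinate direction of a function on `ℝ²`. -/
noncomputable def pd (α : Fin 2) (f : EuclideanSpace ℝ (Fin 2) → ℝ) :
    EuclideanSpace ℝ (Fin 2) → ℝ :=
  fun x => fderiv ℝ f x (EuclideanSpace.single α 1)

/-- The 2D Levi-Civita symbol: `ε₀₁ = 1 = −ε₁₀`, `ε₀₀ = ε₁₁ = 0`. -/
noncomputable def eps2 (a b : Fin 2) : ℝ := ((b : ℕ) : ℝ) - ((a : ℕ) : ℝ)

/-- Weight of the auxiliary defect density `α_β = B^i_β − ε_{βγ}(p^i_γ − x₀_γ) Ω_i`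
at the `i`-th defect point. -/
noncomputable def aw (p : ℕ → EuclideanSpace ℝ (Fin 2)) (x₀ : EuclideanSpace ℝ (Fin 2))
    (Ω : ℕ → ℝ) (B : ℕ → Fin 3 → ℝ) (i : ℕ) (β : Fin 2) : ℝ :=
  B i β.castSucc - (∑ γ : Fin 2, eps2 β γ * (p i γ - x₀ γ)) * Ω i

/-- Weight of the contortion `κ_{kj} = δ_{kz} α_j − ½ α_z δ_{kj}` at the `i`-th defect
point (`k : Fin 3` with `z = 2`, planar `j : Fin 2`, and `α_z = Λ_z` has weight `B^i_z`). -/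
noncomputable def kw (p : ℕ → EuclideanSpace ℝ (Fin 2)) (x₀ : EuclideanSpace ℝ (Fin 2))
    (Ω : ℕ → ℝ) (B : ℕ → Fin 3 → ℝ) (i : ℕ) (k : Fin 3) (j : Fin 2) : ℝ :=
  (if k = 2 then aw p x₀ Ω B i j else 0)
    - (1 / 2) * B i 2 * (if (k : ℕ) = (j : ℕ) then 1 else 0)

lemma coord_le_norm (x : EuclideanSpace ℝ (Fin 2)) (γ : Fin 2) : |x γ| ≤ ‖x‖ := by
  have h1 : |x γ| = Real.sqrt (‖x γ‖ ^ 2) := by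
    rw [Real.sqrt_sq (norm_nonneg _)]; exact (Real.norm_eq_abs _).symm
  rw [h1, EuclideanSpace.norm_eq]
  exact Real.sqrt_le_sqrt
    (Finset.single_le_sum (fun i _ => sq_nonneg ‖x i‖) (Finset.mem_univ γ))

lemma abs_eps2_le (a b : Fin 2) : |eps2 a b| ≤ 1 := by
  fin_cases a <;> fin_cases b <;> simp [eps2] <;> norm_num

lemma aw_eq (p : ℕ → EuclideanSpace ℝ (Fin 2)) (x₀ : EuclideanSpace ℝ (Fin 2))
    (Ω : ℕ → ℝ) (B : ℕ → Fin 3 → ℝ) (i : ℕ) (γ : Fin 2) :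
    aw p x₀ Ω B i γ
      = B i γ.castSucc + (∑ β : Fin 2, eps2 β γ * (p i β - x₀ β)) * Ω i := by
  simp only [aw, Fin.sum_univ_two]
  fin_cases γ <;> simp [eps2] <;> ring

lemma kw_two (p : ℕ → EuclideanSpace ℝ (Fin 2)) (x₀ : EuclideanSpace ℝ (Fin 2))
    (Ω : ℕ → ℝ) (B : ℕ → Fin 3 → ℝ) (i : ℕ) (β : Fin 2) :
    kw p x₀ Ω B i 2 β = aw p x₀ Ω B i β := by
  fin_cases β <;> simp [kw]

lemma kw_castSucc (p : ℕ → EuclideanSpace ℝ (Fin 2)) (x₀ : EuclideanSpace ℝ (Fin 2))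
    (Ω : ℕ → ℝ) (B : ℕ → Fin 3 → ℝ) (i : ℕ) (κ β : Fin 2) :
    kw p x₀ Ω B i κ.castSucc β = if κ = β then (-(1 / 2)) * B i 2 else 0 := by
  fin_cases κ <;> fin_cases β <;> simp [kw] <;> ring

/-- **Kröner's identity (Theorem 2.8 of the paper):** for a countable family of parallel
defect lines with absolutely summable Frank and Burgers weights, all defect-density
series converge distributionally and `δ_{zk}Θ + ε_{αβ}∂_α κ_{kβ}` equals the explicit
incompatibility of the main theorem, tested against any `φ ∈ C_c^∞(ℝ²)`. -/
theorem kroner_identity_countable (p : ℕ → EuclideanSpace ℝ (Fin 2))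
    (hp : Bornology.IsBounded (Set.range p)) (x₀ : EuclideanSpace ℝ (Fin 2))
    (Ω : ℕ → ℝ) (B : ℕ → Fin 3 → ℝ)
    (hsum : Summable fun i => |Ω i| + |B i 0| + |B i 1| + |B i 2|) :
    ∀ φ : EuclideanSpace ℝ (Fin 2) → ℝ, ContDiff ℝ (⊤ : ℕ∞) φ → HasCompactSupport φ →
      (Summable fun i => Ω i * φ (p i)) ∧
      (∀ k : Fin 3, Summable fun i => B i k * φ (p i)) ∧
      (∀ β : Fin 2, Summable fun i => aw p x₀ Ω B i β * φ (p i)) ∧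
      (∀ k : Fin 3, ∀ j α : Fin 2,
        Summable fun i => kw p x₀ Ω B i k j * (-(pd α φ (p i)))) ∧
      (∀ α : Fin 2, Summable fun i => B i 2 * (-(pd α φ (p i)))) ∧
      (Summable fun i => Ω i * φ (p i)
        + ∑ α : Fin 2, ∑ γ : Fin 2,
            eps2 α γ * (B i γ.castSucc + (∑ β : Fin 2, eps2 β γ * (p i β - x₀ β)) * Ω i)
              * (-(pd α φ (p i)))) ∧
      ((∑' i, Ω i * φ (p i))
          + ∑ α : Fin 2, ∑ β : Fin 2,
              eps2 α β * (∑' i, kw p x₀ Ω B i 2 β * (-(pd α φ (p i))))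
        = ∑' i, (Ω i * φ (p i)
            + ∑ α : Fin 2, ∑ γ : Fin 2,
                eps2 α γ
                  * (B i γ.castSucc + (∑ β : Fin 2, eps2 β γ * (p i β - x₀ β)) * Ω i)
                  * (-(pd α φ (p i))))) ∧
      (∀ κ : Fin 2,
        ∑ α : Fin 2, ∑ β : Fin 2,
            eps2 α β * (∑' i, kw p x₀ Ω B i κ.castSucc β * (-(pd α φ (p i))))
          = (1 / 2) * ∑ α : Fin 2, eps2 κ α * (∑' i, B i 2 * (-(pd α φ (p i))))) := by
  intro φ hφ hφc
  -- bounds on the test function and its derivative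
  obtain ⟨Cφ, hCφ⟩ := hφc.exists_bound_of_continuous hφ.continuous
  obtain ⟨C1, hC1⟩ :=
    (hφc.fderiv ℝ).exists_bound_of_continuous (hφ.continuous_fderiv (by norm_num))
  have hpd : ∀ (α : Fin 2) (x : EuclideanSpace ℝ (Fin 2)), |pd α φ x| ≤ C1 := by
    intro α x
    have h := (fderiv ℝ φ x).le_opNorm (EuclideanSpace.single α 1)
    rw [EuclideanSpace.norm_single, norm_one, mul_one] at h
    exact le_trans h (hC1 x)
  -- bound on the points
  obtain ⟨R, hR⟩ := isBounded_iff_forall_norm_le.mp hp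
  have hRp : ∀ i, ‖p i‖ ≤ R := fun i => hR _ (Set.mem_range_self i)
  set c : ℕ → ℝ := fun i => |Ω i| + |B i 0| + |B i 1| + |B i 2| with hcdef
  have hc0 : ∀ i, 0 ≤ c i := fun i => by positivity
  -- the key comparison principle
  have key : ∀ (W : ℕ → ℝ) (K : ℝ), (∀ i, |W i| ≤ K * c i) →
      ∀ (g : ℕ → ℝ) (C : ℝ), (∀ i, |g i| ≤ C) → Summable fun i => W i * g i := by
    intro W K hW g C hg
    apply Summable.of_norm_bounded (hsum.mul_left (K * C))
    intro i
    rw [Real.norm_eq_abs, abs_mul]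
    calc |W i| * |g i| ≤ (K * c i) * C :=
          mul_le_mul (hW i) (hg i) (abs_nonneg _)
            (le_trans (abs_nonneg (W i)) (hW i))
      _ = (K * C) * c i := by ring
  -- bounds on the weights
  have hΩb : ∀ i, |Ω i| ≤ 1 * c i := by
    intro i; rw [one_mul, hcdef]
    have := abs_nonneg (B i 0); have := abs_nonneg (B i 1); have := abs_nonneg (B i 2)
    simp only []; linarith
  have hBb : ∀ i (k : Fin 3), |B i k| ≤ 1 * c i := by
    intro i k; rw [one_mul, hcdef]
    have := abs_nonneg (Ω i)
    have hs : |B i k| ≤ ∑ k' : Fin 3, |B i k'| :=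
      Finset.single_le_sum (f := fun k' => |B i k'|) (fun _ _ => abs_nonneg _)
        (Finset.mem_univ k)
    rw [Fin.sum_univ_three] at hs
    simp only []; linarith
  have hcoord : ∀ i (γ : Fin 2), |p i γ - x₀ γ| ≤ R + ‖x₀‖ := by
    intro i γ
    calc |p i γ - x₀ γ| ≤ |p i γ| + |x₀ γ| := abs_sub _ _
      _ ≤ ‖p i‖ + ‖x₀‖ := add_le_add (coord_le_norm _ _) (coord_le_norm _ _)
      _ ≤ R + ‖x₀‖ := by have := hRp i; linarith
  have hRnn : 0 ≤ R + ‖x₀‖ :=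
    add_nonneg (le_trans (norm_nonneg (p 0)) (hRp 0)) (norm_nonneg _)
  set K0 : ℝ := 2 * (R + ‖x₀‖) with hK0def
  have hK0nn : 0 ≤ K0 := by positivity
  have hSb : ∀ i (β : Fin 2), |∑ γ : Fin 2, eps2 β γ * (p i γ - x₀ γ)| ≤ K0 := by
    intro i β
    rw [Fin.sum_univ_two]
    calc |eps2 β 0 * (p i 0 - x₀ 0) + eps2 β 1 * (p i 1 - x₀ 1)|
        ≤ |eps2 β 0 * (p i 0 - x₀ 0)| + |eps2 β 1 * (p i 1 - x₀ 1)| := abs_add_le _ _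
      _ ≤ (R + ‖x₀‖) + (R + ‖x₀‖) := by
          rw [abs_mul, abs_mul]
          gcongr
          · exact le_trans (mul_le_mul_of_nonneg_right (abs_eps2_le _ _)
              (abs_nonneg _)) (by rw [one_mul]; exact hcoord i 0)
          · exact le_trans (mul_le_mul_of_nonneg_right (abs_eps2_le _ _)
              (abs_nonneg _)) (by rw [one_mul]; exact hcoord i 1)
      _ = K0 := by rw [hK0def]; ring
  have hawb : ∀ i (β : Fin 2), |aw p x₀ Ω B i β| ≤ (1 + K0) * c i := by
    intro i β
    have h1 : |aw p x₀ Ω B i β|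
        ≤ |B i β.castSucc| + |∑ γ : Fin 2, eps2 β γ * (p i γ - x₀ γ)| * |Ω i| := by
      rw [aw]
      exact le_trans (abs_sub _ _) (by rw [abs_mul])
    have h2 : |∑ γ : Fin 2, eps2 β γ * (p i γ - x₀ γ)| * |Ω i| ≤ K0 * c i := by
      apply mul_le_mul (hSb i β) (by have := hΩb i; linarith) (abs_nonneg _) hK0nn
    have h3 := hBb i β.castSucc
    linarith
  have hkwb : ∀ i (k : Fin 3) (j : Fin 2), |kw p x₀ Ω B i k j| ≤ (2 + K0) * c i := by
    intro i k j
    have hA : |if k = 2 then aw p x₀ Ω B i j else 0| ≤ (1 + K0) * c i := by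
      split_ifs
      · exact hawb i j
      · rw [abs_zero]; positivity
    have hI : |(1 / 2 : ℝ) * B i 2 * (if (k : ℕ) = (j : ℕ) then 1 else 0)| ≤ c i := by
      split_ifs
      · rw [mul_one, abs_mul]
        have := hBb i 2
        have h0 := abs_nonneg (B i 2)
        rw [one_mul] at this
        calc |(1 / 2 : ℝ)| * |B i 2| ≤ 1 * |B i 2| := by
              apply mul_le_mul_of_nonneg_right _ h0; rw [abs_of_pos]; norm_num; norm_num
          _ ≤ c i := by rw [one_mul]; exact this
      · rw [mul_zero, abs_zero]; exact hc0 i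
    have := le_trans (abs_sub (if k = 2 then aw p x₀ Ω B i j else 0)
      ((1 / 2 : ℝ) * B i 2 * (if (k : ℕ) = (j : ℕ) then 1 else 0))) (add_le_add hA hI)
    rw [kw]
    linarith
  -- bounds on the evaluated test function
  have hgφ : ∀ i, |φ (p i)| ≤ Cφ := fun i => by
    have := hCφ (p i); rwa [Real.norm_eq_abs] at this
  have hgpd : ∀ (α : Fin 2) i, |(-(pd α φ (p i)))| ≤ C1 := fun α i => by
    rw [abs_neg]; exact hpd α (p i)
  -- summability statements
  have S1 : Summable fun i => Ω i * φ (p i) := key Ω 1 hΩb _ Cφ hgφ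
  have S2 : ∀ k : Fin 3, Summable fun i => B i k * φ (p i) :=
    fun k => key (fun i => B i k) 1 (fun i => hBb i k) _ Cφ hgφ
  have S3 : ∀ β : Fin 2, Summable fun i => aw p x₀ Ω B i β * φ (p i) :=
    fun β => key (fun i => aw p x₀ Ω B i β) (1 + K0) (fun i => hawb i β) _ Cφ hgφ
  have S3' : ∀ (β α : Fin 2), Summable fun i => aw p x₀ Ω B i β * (-(pd α φ (p i))) :=
    fun β α => key (fun i => aw p x₀ Ω B i β) (1 + K0) (fun i => hawb i β) _ C1 (hgpd α)
  have S4 : ∀ (k : Fin 3) (j α : Fin 2),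
      Summable fun i => kw p x₀ Ω B i k j * (-(pd α φ (p i))) :=
    fun k j α => key (fun i => kw p x₀ Ω B i k j) (2 + K0) (fun i => hkwb i k j) _ C1 (hgpd α)
  have S5 : ∀ α : Fin 2, Summable fun i => B i 2 * (-(pd α φ (p i))) :=
    fun α => key (fun i => B i 2) 1 (fun i => hBb i 2) _ C1 (hgpd α)
  have Sterm : ∀ (α γ : Fin 2),
      Summable fun i => eps2 α γ
        * (B i γ.castSucc + (∑ β : Fin 2, eps2 β γ * (p i β - x₀ β)) * Ω i)
        * (-(pd α φ (p i))) := by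
    intro α γ
    have := (S3' γ α).mul_left (eps2 α γ)
    simp only [← aw_eq]
    convert this using 2 with i
    all_goals first | rfl | ring
  have Sdouble : Summable fun i => ∑ α : Fin 2, ∑ γ : Fin 2,
      eps2 α γ * (B i γ.castSucc + (∑ β : Fin 2, eps2 β γ * (p i β - x₀ β)) * Ω i)
        * (-(pd α φ (p i))) :=
    summable_sum fun α _ => summable_sum fun γ _ => Sterm α γ
  have S6 := S1.add Sdouble
  refine ⟨S1, S2, S3, S4, S5, S6, ?_, ?_⟩
  · -- the k = z identity
    rw [S1.tsum_add Sdouble]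
    congr 1
    rw [Summable.tsum_finsetSum (fun α _ => summable_sum fun γ _ => Sterm α γ)]
    refine Finset.sum_congr rfl fun α _ => ?_
    rw [Summable.tsum_finsetSum (fun γ _ => Sterm α γ)]
    refine Finset.sum_congr rfl fun β _ => ?_
    simp only [kw_two, ← aw_eq]
    rw [← tsum_mul_left]
    exact tsum_congr fun i => by ring
  · -- the planar identities
    intro κ
    have hkwT : ∀ (β α : Fin 2),
        (∑' i, kw p x₀ Ω B i κ.castSucc β * (-(pd α φ (p i))))
          = if κ = β then (-(1 / 2)) * ∑' i, B i 2 * (-(pd α φ (p i))) else 0 := by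
      intro β α
      by_cases h : κ = β
      · rw [if_pos h, ← tsum_mul_left]
        refine tsum_congr fun i => ?_
        rw [kw_castSucc, if_pos h]; ring
      · rw [if_neg h]
        convert tsum_zero with i
        rw [kw_castSucc, if_neg h, zero_mul]
    simp only [hkwT, Fin.sum_univ_two]
    fin_cases κ <;> simp [eps2] <;> ring
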